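/- Let R be a commutative Noetherian ring and let I be an ideal of R containing a non-zero-divisor. Then there exist finitely many non-zero-divisors x_1, …, x_n ∈ R such that I = (x_1, …, x_n); that is, I is generated by non-zero-divisors. -/

import Mathlib

section Aux

variable {R : Type*} [CommRing R] {M : Type*} [AddCommGroup M] [Module R M]

lemma aux_mem_ass_iff [IsNoetherianRing R] {P : Ideal R} :
    P ∈ associatedPrimes R M ↔ P.IsPrime ∧ ∃ m : M, P = (Submodule.span R {m}).annihilator := by
  rw [AssociatedPrimes.mem_iff, isAssociatedPrime_iff]
  have h : ∀ m : M, Submodule.colon (⊥ : Submodule R M) {m} = (Submodule.span R {m}).annihilator := by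
    intro m; ext r
    rw [Submodule.mem_colon_singleton, Submodule.mem_annihilator_span_singleton, Submodule.mem_bot]
  simp only [h]

/-- Associated primes of `M` are associated primes of `N` or of `M ⧸ N`. -/
lemma aux_ass_subset_union [IsNoetherianRing R] (N : Submodule R M) :
    associatedPrimes R M ⊆ associatedPrimes R N ∪ associatedPrimes R (M ⧸ N) := by
  intro P hP'
  obtain ⟨hP, m, rfl⟩ := aux_mem_ass_iff.1 hP'
  by_cases h : ∀ a : R, a • m ∈ N → a • m = 0
  · right
    refine aux_mem_ass_iff.2 ⟨hP, Submodule.Quotient.mk m, ?_⟩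
    ext r
    simp only [Submodule.mem_annihilator_span_singleton]
    rw [← Submodule.Quotient.mk_smul, Submodule.Quotient.mk_eq_zero]
    exact ⟨fun hr => by rw [hr]; exact N.zero_mem, fun hr => h r hr⟩
  · left
    push_neg at h
    obtain ⟨a, haN, ha0⟩ := h
    have haP : a ∉ (Submodule.span R {m}).annihilator := by
      rw [Submodule.mem_annihilator_span_singleton]; exact ha0
    refine aux_mem_ass_iff.2 ⟨hP, ⟨a • m, haN⟩, ?_⟩
    ext r
    simp only [Submodule.mem_annihilator_span_singleton]
    constructor
    · intro hr
      apply Subtype.ext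
      show r • (a • m) = (0 : M)
      rw [smul_comm, hr, smul_zero]
    · intro hr
      have h1 : r • (a • m) = 0 := by
        have := congrArg (fun z : ↥N => (z : M)) hr
        simpa using this
      rw [← mul_smul] at h1
      have hra : r * a ∈ (Submodule.span R {m}).annihilator := by
        rw [Submodule.mem_annihilator_span_singleton]; exact h1
      have hrP := (hP.mem_or_mem hra).resolve_right haP
      rwa [Submodule.mem_annihilator_span_singleton] at hrP

/-- Associated primes of `R ⧸ p` for `p` prime are contained in `{p}`. -/
lemma aux_ass_quotient_prime [IsNoetherianRing R] {p : Ideal R} (hp : p.IsPrime) :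
    associatedPrimes R (R ⧸ p) ⊆ {p} := by
  intro P hP'
  obtain ⟨hP, m, rfl⟩ := aux_mem_ass_iff.1 hP'
  obtain ⟨a, rfl⟩ := Submodule.Quotient.mk_surjective p m
  by_cases ha : a ∈ p
  · exfalso
    apply hP.ne_top
    rw [Ideal.eq_top_iff_one, Submodule.mem_annihilator_span_singleton,
      ← Submodule.Quotient.mk_smul, Submodule.Quotient.mk_eq_zero]
    simpa using ha
  · have : (Submodule.span R {Submodule.Quotient.mk (p := p) a}).annihilator = p := by
      ext r
      rw [Submodule.mem_annihilator_span_singleton, ← Submodule.Quotient.mk_smul,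
        Submodule.Quotient.mk_eq_zero, smul_eq_mul]
      exact ⟨fun h => (hp.mem_or_mem h).resolve_right ha, fun h => p.mul_mem_right a h⟩
    exact this

/-- Finiteness of the set of associated primes of a Noetherian module. -/
lemma aux_ass_finite [IsNoetherianRing R] [IsNoetherian R M] :
    (associatedPrimes R M).Finite := by
  obtain ⟨N, hN, hmax⟩ :=
    (set_has_maximal_iff_noetherian.mpr (inferInstance : IsNoetherian R M))
      {N : Submodule R M | (associatedPrimes R N).Finite}
      ⟨⊥, by
        simp only [Set.mem_setOf_eq]
        rw [associatedPrimes.eq_empty_of_subsingleton]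
        exact Set.finite_empty⟩
  by_cases hNtop : N = ⊤
  · subst hNtop
    rwa [Set.mem_setOf_eq, LinearEquiv.AssociatedPrimes.eq (Submodule.topEquiv (R := R) (M := M))] at hN
  · exfalso
    have hlt : N < ⊤ := lt_top_iff_ne_top.mpr hNtop
    have : Nontrivial (M ⧸ N) := Submodule.Quotient.nontrivial_iff.2 hNtop
    obtain ⟨p, hp⟩ := associatedPrimes.nonempty R (M ⧸ N)
    obtain ⟨hpprime, mbar, hmbar⟩ := aux_mem_ass_iff.1 hp
    obtain ⟨m, rfl⟩ := Submodule.Quotient.mk_surjective N mbar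
    have hmN : m ∉ N := by
      intro hm
      apply hpprime.ne_top
      rw [hmbar, Ideal.eq_top_iff_one, Submodule.mem_annihilator_span_singleton,
        ← Submodule.Quotient.mk_smul, Submodule.Quotient.mk_eq_zero]
      simpa using hm
    set N' : Submodule R M := N ⊔ Submodule.span R {m} with hN'def
    have hNN' : N ≤ N' := le_sup_left
    have hmN' : m ∈ N' := Submodule.mem_sup_right (Submodule.mem_span_singleton_self m)
    have hlt' : N < N' := lt_of_le_of_ne hNN' (fun h => hmN (h ▸ hmN'))
    set NN : Submodule R ↥N' := N.comap N'.subtype with hNNdef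
    -- the map R → N'/NN, r ↦ r • m
    set f : R →ₗ[R] ↥N' := LinearMap.toSpanSingleton R ↥N' ⟨m, hmN'⟩ with hfdef
    set φ : R →ₗ[R] ↥N' ⧸ NN := NN.mkQ.comp f with hφdef
    have hker : LinearMap.ker φ = (Submodule.span R {Submodule.Quotient.mk (p := N) m}).annihilator := by
      ext r
      rw [LinearMap.mem_ker, Submodule.mem_annihilator_span_singleton,
        ← Submodule.Quotient.mk_smul, Submodule.Quotient.mk_eq_zero]
      show NN.mkQ (f r) = 0 ↔ r • m ∈ N
      rw [Submodule.mkQ_apply, Submodule.Quotient.mk_eq_zero]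
      exact Iff.rfl
    have hsurj : Function.Surjective φ := by
      intro z
      obtain ⟨⟨w, hw⟩, rfl⟩ := Submodule.Quotient.mk_surjective NN z
      rw [hN'def] at hw
      obtain ⟨n, hn, t, ht, rfl⟩ := Submodule.mem_sup.mp hw
      obtain ⟨r, rfl⟩ := Submodule.mem_span_singleton.mp ht
      refine ⟨r, ?_⟩
      show Submodule.Quotient.mk (f r) = Submodule.Quotient.mk (⟨n + r • m, hw⟩ : ↥N')
      rw [Submodule.Quotient.eq]
      have : f r = (⟨r • m, Submodule.smul_mem _ r hmN'⟩ : ↥N') := rfl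
      rw [this]
      show (⟨r • m, _⟩ : ↥N') - ⟨n + r • m, hw⟩ ∈ NN
      have : (⟨r • m, Submodule.smul_mem _ r hmN'⟩ : ↥N') - ⟨n + r • m, hw⟩ =
          ⟨r • m - (n + r • m), sub_mem (Submodule.smul_mem _ r hmN') hw⟩ := rfl
      rw [this]
      show r • m - (n + r • m) ∈ N
      have : r • m - (n + r • m) = -n := by abel
      rw [this]
      exact N.neg_mem hn
    have e := φ.quotKerEquivOfSurjective hsurj
    rw [hker, ← hmbar] at e
    -- now bound the associated primes of N'
    have hfin' : (associatedPrimes R ↥N').Finite := by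
      apply Set.Finite.subset (Set.Finite.union (Set.Finite.union hN (Set.finite_singleton p))
        Set.finite_empty)
      intro Q hQ
      rcases aux_ass_subset_union NN hQ with hQ1 | hQ2
      · left; left
        rwa [LinearEquiv.AssociatedPrimes.eq (Submodule.comapSubtypeEquivOfLe hNN')] at hQ1
      · left; right
        rw [← LinearEquiv.AssociatedPrimes.eq e] at hQ2
        exact aux_ass_quotient_prime hpprime hQ2
    exact hmax N' hfin' hlt'

/-- Davis-type prime avoidance: if `x` avoids each prime in a finite set `s`,
then for any `y` some `y + c * x` avoids all primes of `s`. -/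
lemma aux_davis (x y : R) : ∀ s : Finset (Ideal R), (∀ P ∈ s, P.IsPrime) →
    (∀ P ∈ s, x ∉ P) → ∃ c : R, ∀ P ∈ s, y + c * x ∉ P := by
  classical
  intro s
  induction s using Finset.strongInduction with
  | _ s ih =>
    intro hprime hx
    rcases s.eq_empty_or_nonempty with rfl | hne
    · exact ⟨0, by simp⟩
    obtain ⟨P₀, hP₀s, hP₀min⟩ := s.exists_minimal hne
    obtain ⟨c, hc⟩ := ih (s.erase P₀) (Finset.erase_ssubset hP₀s)
      (fun P hP => hprime P (Finset.mem_of_mem_erase hP))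
      (fun P hP => hx P (Finset.mem_of_mem_erase hP))
    by_cases h0 : y + c * x ∈ P₀
    · have hP₀p := hprime P₀ hP₀s
      have hnle : ¬ (s.erase P₀).inf id ≤ P₀ := by
        rw [hP₀p.inf_le']
        rintro ⟨P, hP, hle⟩
        exact (lt_of_le_of_ne hle (Finset.ne_of_mem_erase hP)).not_ge
          (hP₀min (Finset.mem_of_mem_erase hP) hle)
      obtain ⟨t, ht, htP₀⟩ := SetLike.not_le_iff_exists.mp hnle
      refine ⟨c + t, fun P hP => ?_⟩
      by_cases hPP : P = P₀
      · subst hPP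
        intro habs
        have htx : t * x ∉ P := fun h => (hP₀p.mem_or_mem h).elim htP₀ (hx P hP)
        apply htx
        have : t * x = (y + (c + t) * x) - (y + c * x) := by ring
        rw [this]
        exact P.sub_mem habs h0
      · have hPe : P ∈ s.erase P₀ := Finset.mem_erase.mpr ⟨hPP, hP⟩
        intro habs
        apply hc P hPe
        have htP : t ∈ P := (Finset.inf_le (f := id) hPe : _ ≤ P) ht
        have : y + c * x = (y + (c + t) * x) - t * x := by ring
        rw [this]
        exact P.sub_mem habs (P.mul_mem_right x htP)
    · refine ⟨c, fun P hP => ?_⟩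
      by_cases hPP : P = P₀
      · subst hPP; exact h0
      · exact hc P (Finset.mem_erase.mpr ⟨hPP, hP⟩)

/-- In a Noetherian ring, for a non-zero-divisor `x` and any `y`, some `y + c * x`
is a non-zero-divisor. -/
lemma aux_exists_nzd [IsNoetherianRing R] {x : R} (hx : ∀ r : R, r * x = 0 → r = 0) (y : R) :
    ∃ c : R, ∀ r : R, r * (y + c * x) = 0 → r = 0 := by
  have hfin : (associatedPrimes R R).Finite := aux_ass_finite
  have hprime : ∀ P ∈ hfin.toFinset, P.IsPrime :=
    fun P hP => ((Set.Finite.mem_toFinset _).1 hP).isPrime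
  have hxs : ∀ P ∈ hfin.toFinset, x ∉ P := by
    intro P hP hxP
    obtain ⟨hPp, m, hm⟩ := aux_mem_ass_iff.1 ((Set.Finite.mem_toFinset _).1 hP)
    rw [hm, Submodule.mem_annihilator_span_singleton, smul_eq_mul] at hxP
    have hm0 : m = 0 := hx m (by rwa [mul_comm])
    apply hPp.ne_top
    rw [hm, hm0]
    rw [show Submodule.span R ({0} : Set R) = ⊥ from Submodule.span_singleton_eq_bot.mpr rfl]
    exact Submodule.annihilator_bot
  obtain ⟨c, hc⟩ := aux_davis x y hfin.toFinset hprime hxs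
  refine ⟨c, fun r hr => ?_⟩
  by_contra hr0
  have hmem : (y + c * x) ∈ ⋃ p ∈ associatedPrimes R R, (p : Set R) := by
    rw [biUnion_associatedPrimes_eq_zero_divisors]
    exact ⟨r, hr0, by rw [smul_eq_mul, mul_comm]; exact hr⟩
  obtain ⟨P, hP, hyP⟩ := Set.mem_iUnion₂.mp hmem
  exact hc P ((Set.Finite.mem_toFinset _).2 hP) hyP

end Aux

/-- Let `R` be a commutative Noetherian ring and `I` an ideal containing a
non-zero-divisor.  Then `I` is generated by finitely many non-zero-divisors. -/
theorem stmt17 (R : Type) [CommRing R] [IsNoetherianRing R]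
    (I : Ideal R) (hI : ∃ x ∈ I, ∀ r : R, r * x = 0 → r = 0) :
    ∃ (n : ℕ) (x : Fin n → R), (∀ i, ∀ r : R, r * x i = 0 → r = 0) ∧
      I = Ideal.span (Set.range x) := by
  classical
  obtain ⟨x₀, hx₀I, hx₀⟩ := hI
  set T : Set R := {z | z ∈ I ∧ ∀ r : R, r * z = 0 → r = 0} with hTdef
  have hTI : T ⊆ (I : Set R) := fun z hz => hz.1
  have hspan : Ideal.span T = I := by
    apply le_antisymm (Ideal.span_le.2 hTI)
    intro y hy
    obtain ⟨c, hc⟩ := aux_exists_nzd hx₀ y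
    have h1 : y + c * x₀ ∈ Ideal.span T :=
      Ideal.subset_span ⟨I.add_mem hy (I.mul_mem_left c hx₀I), hc⟩
    have h2 : x₀ ∈ Ideal.span T := Ideal.subset_span ⟨hx₀I, hx₀⟩
    have hy' : y = (y + c * x₀) - c * x₀ := by ring
    rw [hy']
    exact Submodule.sub_mem _ h1 ((Ideal.span T).mul_mem_left c h2)
  obtain ⟨G, hG⟩ := (IsNoetherian.noetherian I : I.FG)
  have hsub : ∀ g ∈ G, ∃ F : Finset R, ↑F ⊆ T ∧ g ∈ Ideal.span (F : Set R) := by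
    intro g hg
    have : g ∈ Ideal.span T := by
      rw [hspan, ← hG]
      exact Ideal.subset_span hg
    exact Submodule.mem_span_finite_of_mem_span this
  choose F hF1 hF2 using hsub
  set FF : Finset R := G.attach.biUnion (fun g => F g.1 g.2) with hFFdef
  have hFFT : (FF : Set R) ⊆ T := by
    intro z hz
    rw [hFFdef] at hz
    simp only [Finset.coe_biUnion, Set.mem_iUnion, Finset.mem_coe] at hz
    obtain ⟨g, _, hzF⟩ := hz
    exact hF1 g.1 g.2 hzF
  have hspanFF : Ideal.span (FF : Set R) = I := by
    apply le_antisymm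
    · rw [Ideal.span_le]
      exact hFFT.trans hTI
    · rw [← hG, Submodule.span_le]
      intro g hg
      have hsubFF : (F g hg : Set R) ⊆ (FF : Set R) := by
        intro z hz
        rw [hFFdef]
        simp only [Finset.coe_biUnion, Set.mem_iUnion, Finset.mem_coe]
        exact ⟨⟨g, hg⟩, G.mem_attach _, hz⟩
      exact Ideal.span_mono hsubFF (hF2 g hg)
  refine ⟨FF.card, fun i => (FF.equivFin.symm i : R), ?_, ?_⟩
  · intro i r hr
    exact (hFFT (FF.equivFin.symm i).2).2 r hr
  · rw [← hspanFF]
    congr 1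
    have hrange : Set.range (fun i => ((FF.equivFin.symm i : R))) = (FF : Set R) := by
      ext z
      constructor
      · rintro ⟨i, rfl⟩
        exact (FF.equivFin.symm i).2
      · intro hz
        exact ⟨FF.equivFin ⟨z, hz⟩, by simp⟩
    exact hrange.symm
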